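/- Let $c > 0$, $a = (1-\sqrt{c})^2$, $b = (1+\sqrt{c})^2$, and let $p_c(x) = \frac{\sqrt{(x-a)(b-x)}}{2\pi x}$ for $a \le x \le b$ and $0$ otherwise. Then $\int_a^b p_c(x)\,dx = \min(c, 1)$. -/

import Mathlib

open Real
open Set


lemma mp_key (a b : ℝ) (ha : 0 < a) (hab : a < b) :
    ∫ x in a..b, Real.sqrt ((x - a) * (b - x)) / (2 * Real.pi * x)
      = (a + b) / 4 - Real.sqrt (a * b) / 2 := by
  have hba : (0:ℝ) < b - a := by linarith
  have hpi : (0:ℝ) < Real.pi := Real.pi_pos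
  set F : ℝ → ℝ := fun x =>
    (Real.sqrt ((x - a) * (b - x)) + ((a + b) / 2) * Real.arcsin ((2*x - a - b)/(b - a))
      - Real.sqrt (a * b) * Real.arcsin (((a + b)*x - 2*a*b)/((b - a)*x))) / (2 * Real.pi)
    with hF
  have hcont : ContinuousOn F (Set.Icc a b) := by
    apply ContinuousOn.div_const
    apply ContinuousOn.sub
    · apply ContinuousOn.add
      · exact (continuous_sqrt.comp (by continuity)).continuousOn
      · exact (continuous_const.mul (Real.continuous_arcsin.comp (by continuity))).continuousOn
    · apply ContinuousOn.mul continuousOn_const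
      apply Real.continuous_arcsin.comp_continuousOn
      apply ContinuousOn.div (by fun_prop) (by fun_prop)
      intro x hx
      have : 0 < x := lt_of_lt_of_le ha hx.1
      positivity
  have hderiv : ∀ x ∈ Set.Ioo a b,
      HasDerivAt F (Real.sqrt ((x - a) * (b - x)) / (2 * Real.pi * x)) x := by
    intro x hx
    have hxa : 0 < x - a := by linarith [hx.1]
    have hbx : 0 < b - x := by linarith [hx.2]
    have hx0 : 0 < x := lt_trans ha hx.1
    have hprod : (0:ℝ) < (x - a) * (b - x) := mul_pos hxa hbx
    have hab' : (0:ℝ) < a * b := mul_pos ha (lt_trans ha hab)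
    obtain ⟨S, hSpos, hS2, hSdef⟩ : ∃ S, 0 < S ∧ S ^ 2 = (x - a) * (b - x) ∧
        Real.sqrt ((x - a) * (b - x)) = S :=
      ⟨_, Real.sqrt_pos.2 hprod, Real.sq_sqrt hprod.le, rfl⟩
    obtain ⟨T, hTpos, hT2, hTdef⟩ : ∃ T, 0 < T ∧ T ^ 2 = a * b ∧ Real.sqrt (a * b) = T :=
      ⟨_, Real.sqrt_pos.2 hab', Real.sq_sqrt hab'.le, rfl⟩
    rw [hSdef]
    -- first term
    have d1 : HasDerivAt (fun y => Real.sqrt ((y - a) * (b - y)))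
        ((a + b - 2*x) / (2 * S)) x := by
      have hu : HasDerivAt (fun y => (y - a) * (b - y)) (a + b - 2*x) x := by
        have h := ((hasDerivAt_id x).sub_const a).mul ((hasDerivAt_id x).const_sub b)
        simp only [id_eq] at h
        refine h.congr_deriv (Eq.symm ?_); ring
      have := hu.sqrt hprod.ne'
      rw [hSdef] at this
      exact this
    -- second term
    have d2 : HasDerivAt (fun y => Real.arcsin ((2*y - a - b)/(b - a))) (1 / S) x := by
      have hg : HasDerivAt (fun y => (2*y - a - b)/(b - a)) (2 / (b - a)) x := by
        have h := (((hasDerivAt_id x).const_mul 2).sub_const (a + b)).div_const (b - a)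
        simp only [id_eq] at h
        have hfe : (fun y : ℝ => (2*y - a - b)/(b - a)) = fun y => (2 * y - (a + b))/(b - a) := by
          funext y; ring
        rw [hfe]
        refine h.congr_deriv (Eq.symm ?_); ring
      have hlt : ((2*x - a - b)/(b - a))^2 < 1 := by
        rw [div_pow, div_lt_one (by positivity)]
        nlinarith
      have hne1 : (2*x - a - b)/(b - a) ≠ 1 := by
        intro h; rw [h] at hlt; norm_num at hlt
      have hnem1 : (2*x - a - b)/(b - a) ≠ -1 := by
        intro h; rw [h] at hlt; norm_num at hlt
      have := (Real.hasDerivAt_arcsin hnem1 hne1).comp x hg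
      refine this.congr_deriv (Eq.symm ?_)
      have hsq : 1 - ((2*x - a - b)/(b - a))^2 = (2 * S / (b - a))^2 := by
        rw [div_pow, div_pow, show (2*S)^2 = 4 * S^2 by ring, hS2]
        field_simp; ring
      rw [hsq, Real.sqrt_sq (by positivity)]
      field_simp
    -- third term
    have d3 : HasDerivAt (fun y => Real.arcsin (((a + b)*y - 2*a*b)/((b - a)*y)))
        (T / (x * S)) x := by
      have hg : HasDerivAt (fun y => ((a + b)*y - 2*a*b)/((b - a)*y))
          (2*a*b / ((b - a) * x^2)) x := by
        have hn : HasDerivAt (fun y => (a + b)*y - 2*a*b) (a + b) x := by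
          have h := ((hasDerivAt_id x).const_mul (a + b)).sub_const (2*a*b)
          simp only [id_eq] at h
          refine h.congr_deriv (Eq.symm ?_); ring
        have hd : HasDerivAt (fun y => (b - a)*y) (b - a) x := by
          have h := (hasDerivAt_id x).const_mul (b - a)
          simp only [id_eq] at h
          refine h.congr_deriv (Eq.symm ?_); ring
        have := hn.div hd (by positivity)
        refine this.congr_deriv (Eq.symm ?_)
        rw [mul_pow]
        field_simp
        ring
      have hlt : (((a + b)*x - 2*a*b)/((b - a)*x))^2 < 1 := by
        rw [div_pow, div_lt_one (by positivity)]
        nlinarith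
      have hne1 : ((a + b)*x - 2*a*b)/((b - a)*x) ≠ 1 := by
        intro h; rw [h] at hlt; norm_num at hlt
      have hnem1 : ((a + b)*x - 2*a*b)/((b - a)*x) ≠ -1 := by
        intro h; rw [h] at hlt; norm_num at hlt
      have := (Real.hasDerivAt_arcsin hnem1 hne1).comp x hg
      refine this.congr_deriv (Eq.symm ?_)
      have hsq : 1 - (((a + b)*x - 2*a*b)/((b - a)*x))^2
          = (2 * T * S / ((b - a) * x))^2 := by
        rw [div_pow, div_pow, show (2*T*S)^2 = 4 * T^2 * S^2 by ring, hS2, hT2]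
        field_simp; ring
      rw [hsq, Real.sqrt_sq (by positivity), one_div_div, div_mul_div_comm,
        div_eq_div_iff (by positivity) (by positivity)]
      linear_combination (2 * S * (b - a) * x^2) * hT2
    -- combine
    have hcomb := (((d1.add (d2.const_mul ((a + b)/2))).sub
        (d3.const_mul (Real.sqrt (a*b)))).div_const (2 * Real.pi))
    refine hcomb.congr_deriv (Eq.symm ?_)
    rw [hTdef]
    field_simp
    linear_combination 2 * hS2 + 2 * hT2
  have hint : IntervalIntegrable (fun x => Real.sqrt ((x - a) * (b - x)) / (2 * Real.pi * x))
      MeasureTheory.volume a b := by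
    apply ContinuousOn.intervalIntegrable
    apply ContinuousOn.div
    · exact (continuous_sqrt.comp (by continuity)).continuousOn
    · fun_prop
    · intro x hx
      rw [uIcc_of_le hab.le] at hx
      have : 0 < x := lt_of_lt_of_le ha hx.1
      positivity
  rw [intervalIntegral.integral_eq_sub_of_hasDerivAt_of_le hab.le hcont hderiv hint]
  have hb0 : (0:ℝ) < b := lt_trans ha hab
  have e1 : (2*a - a - b)/(b - a) = -1 := by rw [div_eq_iff (by positivity)]; ring
  have e2 : (2*b - a - b)/(b - a) = 1 := by rw [div_eq_iff (by positivity)]; ring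
  have e3 : ((a + b)*a - 2*a*b)/((b - a)*a) = -1 := by rw [div_eq_iff (by positivity)]; ring
  have e4 : ((a + b)*b - 2*a*b)/((b - a)*b) = 1 := by rw [div_eq_iff (by positivity)]; ring
  simp only [hF, e1, e2, e3, e4, Real.arcsin_one, Real.arcsin_neg_one]
  rw [show (b - a) * (b - b) = 0 by ring, show (a - a) * (b - a) = 0 by ring, Real.sqrt_zero]
  field_simp
  ring

lemma mp_key0 :
    ∫ x in (0:ℝ)..4, Real.sqrt ((x - 0) * (4 - x)) / (2 * Real.pi * x) = 1 := by
  have hpi : (0:ℝ) < Real.pi := Real.pi_pos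
  set F : ℝ → ℝ := fun x =>
    (Real.sqrt ((x - 0) * (4 - x)) + 2 * Real.arcsin ((2*x - 4)/4)) / (2 * Real.pi) with hF
  have hcont : ContinuousOn F (Set.Icc 0 4) := by
    apply ContinuousOn.div_const
    exact ((continuous_sqrt.comp (by continuity)).add
      (continuous_const.mul (Real.continuous_arcsin.comp (by continuity)))).continuousOn
  have hderiv : ∀ x ∈ Set.Ioo (0:ℝ) 4,
      HasDerivAt F (Real.sqrt ((x - 0) * (4 - x)) / (2 * Real.pi * x)) x := by
    intro x hx
    have hx0 : 0 < x := hx.1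
    have hbx : 0 < 4 - x := by linarith [hx.2]
    have hprod : (0:ℝ) < (x - 0) * (4 - x) := by nlinarith
    obtain ⟨S, hSpos, hS2, hSdef⟩ : ∃ S, 0 < S ∧ S ^ 2 = (x - 0) * (4 - x) ∧
        Real.sqrt ((x - 0) * (4 - x)) = S :=
      ⟨_, Real.sqrt_pos.2 hprod, Real.sq_sqrt hprod.le, rfl⟩
    rw [hSdef]
    have d1 : HasDerivAt (fun y => Real.sqrt ((y - 0) * (4 - y))) ((4 - 2*x) / (2 * S)) x := by
      have hu : HasDerivAt (fun y => (y - 0) * (4 - y)) (4 - 2*x) x := by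
        have h := ((hasDerivAt_id x).sub_const 0).mul ((hasDerivAt_id x).const_sub 4)
        simp only [id_eq] at h
        refine h.congr_deriv (Eq.symm ?_); ring
      have := hu.sqrt hprod.ne'
      rw [hSdef] at this
      exact this
    have d2 : HasDerivAt (fun y => Real.arcsin ((2*y - 4)/4)) (1 / S) x := by
      have hg : HasDerivAt (fun y : ℝ => (2*y - 4)/4) (2 / 4) x := by
        have h := (((hasDerivAt_id x).const_mul 2).sub_const 4).div_const 4
        simp only [id_eq] at h
        refine h.congr_deriv (Eq.symm ?_); ring
      have hlt : ((2*x - 4)/4)^2 < 1 := by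
        rw [div_pow, div_lt_one (by positivity)]
        nlinarith
      have hne1 : (2*x - 4)/4 ≠ 1 := by intro h; rw [h] at hlt; norm_num at hlt
      have hnem1 : (2*x - 4)/4 ≠ -1 := by intro h; rw [h] at hlt; norm_num at hlt
      have := (Real.hasDerivAt_arcsin hnem1 hne1).comp x hg
      refine this.congr_deriv (Eq.symm ?_)
      have hsq : 1 - ((2*x - 4)/4)^2 = (2 * S / 4)^2 := by
        rw [div_pow, div_pow, show (2*S)^2 = 4 * S^2 by ring, hS2]
        field_simp; ring
      rw [hsq, Real.sqrt_sq (by positivity)]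
      field_simp
    have hcomb := ((d1.add (d2.const_mul 2)).div_const (2 * Real.pi))
    refine hcomb.congr_deriv (Eq.symm ?_)
    field_simp
    linear_combination 2 * hS2
  have hint : IntervalIntegrable (fun x => Real.sqrt ((x - 0) * (4 - x)) / (2 * Real.pi * x))
      MeasureTheory.volume 0 4 := by
    have hg : IntervalIntegrable (fun x : ℝ => (1/Real.pi) * x ^ (-(1/2) : ℝ))
        MeasureTheory.volume 0 4 :=
      (intervalIntegral.intervalIntegrable_rpow' (by norm_num)).const_mul _
    apply hg.mono_fun
    · apply Measurable.aestronglyMeasurable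
      apply Measurable.div
      · exact (continuous_sqrt.comp (by continuity)).measurable
      · fun_prop
    · rw [Filter.EventuallyLE, MeasureTheory.ae_restrict_iff' measurableSet_uIoc]
      apply MeasureTheory.ae_of_all
      intro x hx
      rw [Set.uIoc_of_le (by norm_num : (0:ℝ) ≤ 4)] at hx
      have hx0 : 0 < x := hx.1
      have hx4 : x ≤ 4 := hx.2
      simp only [Real.norm_eq_abs]
      rw [abs_of_nonneg (by positivity), abs_of_nonneg (by positivity)]
      have h1 : Real.sqrt ((x - 0) * (4 - x)) ≤ 2 * Real.sqrt x := by
        rw [show (x - 0) * (4 - x) = x * (4 - x) by ring]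
        calc Real.sqrt (x * (4 - x)) ≤ Real.sqrt (x * 4) := by
              apply Real.sqrt_le_sqrt; nlinarith
          _ = 2 * Real.sqrt x := by
              rw [Real.sqrt_mul hx0.le, show (4:ℝ) = 2^2 by norm_num,
                Real.sqrt_sq (by norm_num : (0:ℝ) ≤ 2)]
              ring
      have h2 : x ^ (-(1/2) : ℝ) = (Real.sqrt x)⁻¹ := by
        rw [Real.rpow_neg hx0.le, Real.sqrt_eq_rpow]
      rw [h2]
      have hsx : 0 < Real.sqrt x := Real.sqrt_pos.2 hx0
      rw [div_le_iff₀ (by positivity)]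
      have hxx : Real.sqrt x * Real.sqrt x = x := Real.mul_self_sqrt hx0.le
      calc Real.sqrt ((x - 0) * (4 - x)) ≤ 2 * Real.sqrt x := h1
        _ = 1/Real.pi * (Real.sqrt x)⁻¹ * (2 * Real.pi * x) := by
            field_simp
            nlinarith [hxx]
  rw [intervalIntegral.integral_eq_sub_of_hasDerivAt_of_le (by norm_num) hcont hderiv hint]
  have e1 : ((2*(0:ℝ) - 4)/4 : ℝ) = -1 := by norm_num
  have e2 : ((2*(4:ℝ) - 4)/4 : ℝ) = 1 := by norm_num
  simp only [hF, e1, e2, Real.arcsin_one, Real.arcsin_neg_one]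
  rw [show ((4:ℝ) - 0) * (4 - 4) = 0 by ring, show ((0:ℝ) - 0) * (4 - 0) = 0 by ring,
    Real.sqrt_zero]
  field_simp
  ring


/-- The density of the Marchenko-Pastur law with parameter `c > 0` has total mass
`min c 1` on its support `[a, b]` with `a = (1 - √c)²`, `b = (1 + √c)²`. -/
theorem mp_density_total_mass (c : ℝ) (hc : 0 < c)
    (a b : ℝ) (ha : a = (1 - Real.sqrt c) ^ 2) (hb : b = (1 + Real.sqrt c) ^ 2) :
    ∫ x in a..b, Real.sqrt ((x - a) * (b - x)) / (2 * Real.pi * x) = min c 1 := by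
  have hs2 : Real.sqrt c ^ 2 = c := Real.sq_sqrt hc.le
  have hs0 : 0 < Real.sqrt c := Real.sqrt_pos.2 hc
  rcases eq_or_ne c 1 with hc1 | hc1
  · subst hc1
    rw [Real.sqrt_one] at ha hb
    norm_num at ha hb
    subst ha; subst hb
    norm_num
    simpa using mp_key0
  · have hsne : 1 - Real.sqrt c ≠ 0 := by
      intro h
      apply hc1
      have : Real.sqrt c = 1 := by linarith
      rw [← hs2, this]; norm_num
    have ha0 : 0 < a := by rw [ha]; exact pow_two_pos_of_ne_zero hsne
    have hab : a < b := by rw [ha, hb]; nlinarith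
    rw [mp_key a b ha0 hab]
    have hsum : a + b = 2 + 2 * c := by rw [ha, hb]; linear_combination 2 * hs2
    have hprod : a * b = (1 - c) ^ 2 := by
      rw [ha, hb]; linear_combination (Real.sqrt c ^ 2 + c - 2) * hs2
    rw [hsum, hprod, Real.sqrt_sq_eq_abs]
    rcases le_total c 1 with h | h
    · rw [abs_of_nonneg (by linarith), min_eq_left h]; ring
    · rw [abs_of_nonpos (by linarith), min_eq_right h]; ring
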